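/- For a list x over {0,1}, let dup(x) denote the list obtained by inserting the symbol 1 immediately after every element of x (so dup(x) has length 2·|x|). Then for all binary lists x and y, the Levenshtein edit distance between dup(x) and dup(y) is at least the Levenshtein edit distance between x and y. -/

import Mathlib

/-- The costs of the edit operations (as in Mathlib's former `Levenshtein.Cost`). -/
structure Levenshtein.Cost (α β δ : Type*) where
  delete : α → δ
  insert : β → δ
  substitute : α → β → δ

/-- Unit costs (as in Mathlib's former `Levenshtein.defaultCost`). -/
def Levenshtein.defaultCost {α : Type*} [DecidableEq α] : Levenshtein.Cost α α ℕ where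
  delete _ := 1
  insert _ := 1
  substitute a b := if a = b then 0 else 1

/-- One step of the dynamic program (as in Mathlib's former `Levenshtein.impl`). -/
def Levenshtein.impl {α β δ : Type*} [AddZeroClass δ] [Min δ] (C : Levenshtein.Cost α β δ)
    (xs : List α) (y : β) (d : {r : List δ // 0 < r.length}) : {r : List δ // 0 < r.length} :=
  let ⟨ds, w⟩ := d
  xs.zip (ds.zip ds.tail) |>.foldr
    (init := ⟨[C.insert y + ds.getLast (List.length_pos_iff.mp w)], by simp⟩)
    (fun ⟨x, d₀, d₁⟩ ⟨r, w⟩ =>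
      ⟨min (C.delete x + r[0]) (min (C.insert y + d₀) (C.substitute x y + d₁)) :: r, by simp⟩)

/-- Edit distances of all suffixes (as in Mathlib's former `suffixLevenshtein`). -/
def suffixLevenshtein {α β δ : Type*} [AddZeroClass δ] [Min δ] (C : Levenshtein.Cost α β δ)
    (xs : List α) (ys : List β) : {r : List δ // 0 < r.length} :=
  ys.foldr
    (Levenshtein.impl C xs)
    (xs.foldr (init := ⟨[0], by simp⟩) (fun a ⟨r, w⟩ => ⟨(C.delete a + r[0]) :: r, by simp⟩))

/-- The Levenshtein distance (as in Mathlib's former `levenshtein`). -/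
def levenshtein {α β δ : Type*} [AddZeroClass δ] [Min δ] (C : Levenshtein.Cost α β δ)
    (xs : List α) (ys : List β) : δ :=
  let ⟨r, w⟩ := suffixLevenshtein C xs ys
  r[0]

namespace Levenshtein

@[simp] theorem defaultCost_delete {α : Type*} [DecidableEq α] (a : α) :
    (defaultCost : Cost α α ℕ).delete a = 1 := rfl

@[simp] theorem defaultCost_insert {α : Type*} [DecidableEq α] (a : α) :
    (defaultCost : Cost α α ℕ).insert a = 1 := rfl

@[simp] theorem defaultCost_substitute {α : Type*} [DecidableEq α] (a b : α) :
    (defaultCost : Cost α α ℕ).substitute a b = if a = b then 0 else 1 := rfl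

theorem impl_cons {α β δ : Type*} [AddZeroClass δ] [Min δ] (C : Cost α β δ)
    (x : α) (xs : List α) (y : β) (d : δ) (ds : List δ) (w) (w' : 0 < List.length ds) :
    impl C (x :: xs) y ⟨d :: ds, w⟩ =
      let ⟨r, w⟩ := impl C xs y ⟨ds, w'⟩
      ⟨min (C.delete x + r[0]) (min (C.insert y + d) (C.substitute x y + ds[0])) :: r, by simp⟩ :=
  match ds, w' with | _ :: _, _ => rfl

theorem impl_cons_fst_zero {α β δ : Type*} [AddZeroClass δ] [Min δ] (C : Cost α β δ)
    (x : α) (xs : List α) (y : β) (d : δ) (ds : List δ) (w) (h) (w' : 0 < List.length ds) :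
    (impl C (x :: xs) y ⟨d :: ds, w⟩).1[0]'h =
      let ⟨r, w⟩ := impl C xs y ⟨ds, w'⟩
      min (C.delete x + r[0]) (min (C.insert y + d) (C.substitute x y + ds[0])) :=
  match ds, w' with | _ :: _, _ => rfl

theorem impl_length {α β δ : Type*} [AddZeroClass δ] [Min δ] (C : Cost α β δ)
    (xs : List α) (y : β)
    (d : {r : List δ // 0 < r.length}) (w : d.1.length = xs.length + 1) :
    (impl C xs y d).1.length = xs.length + 1 := by
  induction xs generalizing d with
  | nil => rfl
  | cons x xs ih =>
    dsimp [impl]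
    match d, w with
    | ⟨d₁ :: d₂ :: ds, _⟩, w =>
      dsimp
      congr 1
      exact ih ⟨d₂ :: ds, (by simp)⟩ (by simpa using w)

end Levenshtein

open Levenshtein in
theorem suffixLevenshtein_length {α β δ : Type*} [AddZeroClass δ] [Min δ] (C : Cost α β δ)
    (xs : List α) (ys : List β) :
    (suffixLevenshtein C xs ys).1.length = xs.length + 1 := by
  induction ys with
  | nil =>
    dsimp [suffixLevenshtein]
    induction xs with
    | nil => rfl
    | cons _ xs ih =>
      simp_all
  | cons y ys ih =>
    dsimp [suffixLevenshtein]
    rw [impl_length]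
    exact ih

open Levenshtein in
theorem suffixLevenshtein_cons₂ {α β δ : Type*} [AddZeroClass δ] [Min δ] (C : Cost α β δ)
    (xs : List α) (y : β) (ys : List β) :
    suffixLevenshtein C xs (y :: ys) = (impl C xs) y (suffixLevenshtein C xs ys) :=
  rfl

theorem suffixLevenshtein_cons₁_aux {δ : Type*} {x y : {r : List δ // 0 < r.length}}
    (w₀ : x.1[0]'x.2 = y.1[0]'y.2) (w : x.1.tail = y.1.tail) : x = y := by
  match x, y with
  | ⟨hx :: tx, _⟩, ⟨hy :: ty, _⟩ => simp_all

open Levenshtein in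
theorem suffixLevenshtein_cons₁ {α β δ : Type*} [AddZeroClass δ] [Min δ] (C : Cost α β δ)
    (x : α) (xs : List α) (ys : List β) :
    suffixLevenshtein C (x :: xs) ys =
      ⟨levenshtein C (x :: xs) ys ::
        (suffixLevenshtein C xs ys).1, by simp⟩ := by
  induction ys with
  | nil =>
    dsimp [levenshtein, suffixLevenshtein]
    rfl
  | cons y ys ih =>
    apply suffixLevenshtein_cons₁_aux
    · rfl
    · rw [suffixLevenshtein_cons₂ C (x :: xs), ih, impl_cons]
      · rfl
      · simp [suffixLevenshtein_length]

open Levenshtein in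
theorem levenshtein_cons_cons {α β δ : Type*} [AddZeroClass δ] [Min δ] (C : Cost α β δ)
    (x : α) (xs : List α) (y : β) (ys : List β) :
    levenshtein C (x :: xs) (y :: ys) =
      min (C.delete x + levenshtein C xs (y :: ys))
        (min (C.insert y + levenshtein C (x :: xs) ys)
          (C.substitute x y + levenshtein C xs ys)) := by
  show (suffixLevenshtein C (x :: xs) (y :: ys)).1[0]'(by simp [suffixLevenshtein_length]) = _
  conv =>
    lhs
    dsimp only [suffixLevenshtein_cons₂]
  simp only [suffixLevenshtein_cons₁]
  rw [impl_cons_fst_zero]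
  rfl

open Levenshtein in
@[simp] theorem levenshtein_nil_nil {α β δ : Type*} [AddZeroClass δ] [Min δ] (C : Cost α β δ) :
    levenshtein C ([] : List α) ([] : List β) = 0 := by
  simp [levenshtein, suffixLevenshtein]

open Levenshtein in
@[simp] theorem levenshtein_nil_cons {α β δ : Type*} [AddZeroClass δ] [Min δ] (C : Cost α β δ)
    (y : β) (ys : List β) :
    levenshtein C ([] : List α) (y :: ys) = C.insert y + levenshtein C [] ys := by
  have h1 := suffixLevenshtein_length C ([] : List α) ys
  show C.insert y + (suffixLevenshtein C [] ys).1.getLast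
      (List.length_pos_iff.mp (suffixLevenshtein C [] ys).2)
    = C.insert y + (suffixLevenshtein C [] ys).1[0]'(suffixLevenshtein C [] ys).2
  have key : ∀ (d : {r : List δ // 0 < r.length}), d.1.length = 1 →
      d.1.getLast (List.length_pos_iff.mp d.2) = d.1[0]'d.2 := by
    rintro ⟨l, hl⟩ h
    match l, hl, h with
    | [a], _, _ => rfl
  exact congrArg _ (key _ (by simpa using h1))

open Levenshtein in
@[simp] theorem levenshtein_cons_nil {α β δ : Type*} [AddZeroClass δ] [Min δ] (C : Cost α β δ)
    (x : α) (xs : List α) :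
    levenshtein C (x :: xs) ([] : List β) = C.delete x + levenshtein C xs [] :=
  rfl


private def dl (x : List Bool) : List Bool := x.flatMap (fun a => [a, true])

private theorem dl_nil : dl [] = [] := rfl

private theorem dl_cons (a : Bool) (x : List Bool) : dl (a :: x) = a :: true :: dl x := rfl

private theorem dl_length (x : List Bool) : (dl x).length = 2 * x.length := by
  induction x with
  | nil => rfl
  | cons a x ih => rw [dl_cons]; simp [ih]; omega

private theorem lev_nil_left (y : List Bool) :
    levenshtein Levenshtein.defaultCost ([] : List Bool) y = y.length := by
  induction y with
  | nil => simp
  | cons b y ih => simp [ih]; omega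

private theorem lev_nil_right (x : List Bool) :
    levenshtein Levenshtein.defaultCost x ([] : List Bool) = x.length := by
  induction x with
  | nil => simp
  | cons a x ih => simp [ih]; omega

private theorem lev_sub_one (a b : Bool) : Levenshtein.defaultCost.substitute a b ≤ 1 := by
  cases a <;> cases b <;> simp

private theorem lev_del_le (a : Bool) (x y : List Bool) :
    levenshtein Levenshtein.defaultCost (a :: x) y
      ≤ 1 + levenshtein Levenshtein.defaultCost x y := by
  cases y with
  | nil => simp
  | cons b y =>
    rw [levenshtein_cons_cons]
    exact le_trans inf_le_left (by simp)

private theorem lev_ins_le (b : Bool) (x y : List Bool) :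
    levenshtein Levenshtein.defaultCost x (b :: y)
      ≤ 1 + levenshtein Levenshtein.defaultCost x y := by
  cases x with
  | nil => simp
  | cons a x =>
    rw [levenshtein_cons_cons]
    exact le_trans (le_trans inf_le_right inf_le_left) (by simp)

private theorem lev_sub_le (a b : Bool) (x y : List Bool) :
    levenshtein Levenshtein.defaultCost (a :: x) (b :: y)
      ≤ Levenshtein.defaultCost.substitute a b + levenshtein Levenshtein.defaultCost x y := by
  rw [levenshtein_cons_cons]
  exact le_trans inf_le_right inf_le_right

private theorem key : ∀ (n : ℕ) (x y : List Bool),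
    (2 * (x.length + y.length) ≤ n →
      levenshtein Levenshtein.defaultCost x y
        ≤ levenshtein Levenshtein.defaultCost (dl x) (dl y)) ∧
    (2 * (x.length + y.length) + 1 ≤ n →
      levenshtein Levenshtein.defaultCost x y
        ≤ levenshtein Levenshtein.defaultCost (true :: dl x) (dl y)) ∧
    (2 * (x.length + y.length) + 1 ≤ n →
      levenshtein Levenshtein.defaultCost (true :: x) y
        ≤ levenshtein Levenshtein.defaultCost (true :: dl x) (dl y)) ∧
    (2 * (x.length + y.length) + 1 ≤ n →
      levenshtein Levenshtein.defaultCost x y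
        ≤ levenshtein Levenshtein.defaultCost (dl x) (true :: dl y)) ∧
    (2 * (x.length + y.length) + 1 ≤ n →
      levenshtein Levenshtein.defaultCost x (true :: y)
        ≤ levenshtein Levenshtein.defaultCost (dl x) (true :: dl y)) ∧
    (2 * (x.length + y.length) + 2 ≤ n →
      levenshtein Levenshtein.defaultCost x y
        ≤ levenshtein Levenshtein.defaultCost (true :: dl x) (true :: dl y)) := by
  intro n
  induction n using Nat.strong_induction_on with
  | _ n ih =>
  intro x y
  refine ⟨?_, ?_, ?_, ?_, ?_, ?_⟩
  -- Claim A : D x y ≤ D (dl x) (dl y)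
  · intro h
    cases x with
    | nil => rw [dl_nil, lev_nil_left, lev_nil_left, dl_length]; omega
    | cons a x' =>
      cases y with
      | nil => rw [dl_nil, lev_nil_right, lev_nil_right, dl_length]; omega
      | cons b y' =>
        simp only [List.length_cons] at h
        rw [dl_cons, dl_cons]
        conv_lhs => rw [levenshtein_cons_cons]
        conv_rhs => rw [levenshtein_cons_cons]
        simp only [Levenshtein.defaultCost_delete, Levenshtein.defaultCost_insert]
        refine le_inf (le_trans inf_le_left ?_)
          (le_inf (le_trans (le_trans inf_le_right inf_le_left) ?_)
            (le_trans (le_trans inf_le_right inf_le_right) ?_))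
        · have hB := (ih (2 * (x'.length + (b :: y').length) + 1)
            (by simp only [List.length_cons]; omega) x' (b :: y')).2.1 (le_refl _)
          rw [dl_cons] at hB
          exact Nat.add_le_add_left hB 1
        · have hC := (ih (2 * ((a :: x').length + y'.length) + 1)
            (by simp only [List.length_cons]; omega) (a :: x') y').2.2.2.1 (le_refl _)
          rw [dl_cons] at hC
          exact Nat.add_le_add_left hC 1
        · have hF := (ih (2 * (x'.length + y'.length) + 2)
            (by omega) x' y').2.2.2.2.2 (le_refl _)
          exact Nat.add_le_add_left hF _
  -- Claim B : D x y ≤ D (true::dl x) (dl y)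
  · intro h
    cases y with
    | nil =>
      rw [dl_nil, lev_nil_right, lev_nil_right, List.length_cons, dl_length]; omega
    | cons b y' =>
      simp only [List.length_cons] at h
      rw [dl_cons]
      conv_rhs => rw [levenshtein_cons_cons]
      simp only [Levenshtein.defaultCost_delete, Levenshtein.defaultCost_insert]
      refine le_inf ?_ (le_inf ?_ ?_)
      · have hA := (ih (2 * (x.length + (b :: y').length))
          (by simp only [List.length_cons]; omega) x (b :: y')).1 (le_refl _)
        rw [dl_cons] at hA
        exact le_trans hA (Nat.le_add_left _ 1)
      · have hF := (ih (2 * (x.length + y'.length) + 2)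
          (by omega) x y').2.2.2.2.2 (le_refl _)
        exact le_trans (lev_ins_le b x y') (Nat.add_le_add_left hF 1)
      · cases b with
        | true =>
          have hC' := (ih (2 * (x.length + y'.length) + 1)
            (by omega) x y').2.2.2.2.1 (le_refl _)
          simpa using hC'
        | false =>
          have hC := (ih (2 * (x.length + y'.length) + 1)
            (by omega) x y').2.2.2.1 (le_refl _)
          have : Levenshtein.defaultCost.substitute true false = 1 := by simp
          rw [this]
          exact le_trans (lev_ins_le false x y') (Nat.add_le_add_left hC 1)
  -- Claim B' : D (true::x) y ≤ D (true::dl x) (dl y)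
  · intro h
    cases y with
    | nil =>
      rw [dl_nil, lev_nil_right, lev_nil_right, List.length_cons, List.length_cons, dl_length]
      omega
    | cons b y' =>
      simp only [List.length_cons] at h
      rw [dl_cons]
      conv_rhs => rw [levenshtein_cons_cons]
      simp only [Levenshtein.defaultCost_delete, Levenshtein.defaultCost_insert]
      refine le_inf ?_ (le_inf ?_ ?_)
      · have hA := (ih (2 * (x.length + (b :: y').length))
          (by simp only [List.length_cons]; omega) x (b :: y')).1 (le_refl _)
        rw [dl_cons] at hA
        exact le_trans (lev_del_le true x (b :: y')) (Nat.add_le_add_left hA 1)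
      · have hF := (ih (2 * (x.length + y'.length) + 2)
          (by omega) x y').2.2.2.2.2 (le_refl _)
        refine le_trans (lev_sub_le true b x y') ?_
        exact le_trans (Nat.add_le_add_right (lev_sub_one true b) _) (Nat.add_le_add_left hF 1)
      · cases b with
        | true =>
          have hC := (ih (2 * (x.length + y'.length) + 1)
            (by omega) x y').2.2.2.1 (le_refl _)
          refine le_trans (lev_sub_le true true x y') ?_
          simpa using hC
        | false =>
          have hC := (ih (2 * (x.length + y'.length) + 1)
            (by omega) x y').2.2.2.1 (le_refl _)
          refine le_trans (lev_sub_le true false x y') ?_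
          have : Levenshtein.defaultCost.substitute true false = 1 := by simp
          rw [this]
          exact Nat.add_le_add_left hC 1
  -- Claim C : D x y ≤ D (dl x) (true::dl y)
  · intro h
    cases x with
    | nil =>
      rw [dl_nil, lev_nil_left, lev_nil_left, List.length_cons, dl_length]; omega
    | cons a x' =>
      simp only [List.length_cons] at h
      rw [dl_cons]
      conv_rhs => rw [levenshtein_cons_cons]
      simp only [Levenshtein.defaultCost_delete, Levenshtein.defaultCost_insert]
      refine le_inf ?_ (le_inf ?_ ?_)
      · have hF := (ih (2 * (x'.length + y.length) + 2)
          (by omega) x' y).2.2.2.2.2 (le_refl _)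
        exact le_trans (lev_del_le a x' y) (Nat.add_le_add_left hF 1)
      · have hA := (ih (2 * ((a :: x').length + y.length))
          (by simp only [List.length_cons]; omega) (a :: x') y).1 (le_refl _)
        rw [dl_cons] at hA
        exact le_trans hA (Nat.le_add_left _ 1)
      · cases a with
        | true =>
          have hB' := (ih (2 * (x'.length + y.length) + 1)
            (by omega) x' y).2.2.1 (le_refl _)
          simpa using hB'
        | false =>
          have hB := (ih (2 * (x'.length + y.length) + 1)
            (by omega) x' y).2.1 (le_refl _)
          have : Levenshtein.defaultCost.substitute false true = 1 := by simp
          rw [this]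
          exact le_trans (lev_del_le false x' y) (Nat.add_le_add_left hB 1)
  -- Claim C' : D x (true::y) ≤ D (dl x) (true::dl y)
  · intro h
    cases x with
    | nil =>
      rw [dl_nil, lev_nil_left, lev_nil_left, List.length_cons, List.length_cons, dl_length]
      omega
    | cons a x' =>
      simp only [List.length_cons] at h
      rw [dl_cons]
      conv_rhs => rw [levenshtein_cons_cons]
      simp only [Levenshtein.defaultCost_delete, Levenshtein.defaultCost_insert]
      refine le_inf ?_ (le_inf ?_ ?_)
      · have hF := (ih (2 * (x'.length + y.length) + 2)
          (by omega) x' y).2.2.2.2.2 (le_refl _)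
        refine le_trans (lev_sub_le a true x' y) ?_
        exact le_trans (Nat.add_le_add_right (lev_sub_one a true) _) (Nat.add_le_add_left hF 1)
      · have hA := (ih (2 * ((a :: x').length + y.length))
          (by simp only [List.length_cons]; omega) (a :: x') y).1 (le_refl _)
        rw [dl_cons] at hA
        exact le_trans (lev_ins_le true (a :: x') y) (Nat.add_le_add_left hA 1)
      · have hB := (ih (2 * (x'.length + y.length) + 1)
          (by omega) x' y).2.1 (le_refl _)
        exact le_trans (lev_sub_le a true x' y) (Nat.add_le_add_left hB _)
  -- Claim F : D x y ≤ D (true::dl x) (true::dl y)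
  · intro h
    conv_rhs => rw [levenshtein_cons_cons]
    have hsub : Levenshtein.defaultCost.substitute true true = 0 := by simp
    simp only [Levenshtein.defaultCost_delete, Levenshtein.defaultCost_insert, hsub,
      Nat.zero_add]
    refine le_inf ?_ (le_inf ?_ ?_)
    · have hC := (ih (2 * (x.length + y.length) + 1) (by omega) x y).2.2.2.1 (le_refl _)
      exact le_trans hC (Nat.le_add_left _ 1)
    · have hB := (ih (2 * (x.length + y.length) + 1) (by omega) x y).2.1 (le_refl _)
      exact le_trans hB (Nat.le_add_left _ 1)
    · exact (ih (2 * (x.length + y.length)) (by omega) x y).1 (le_refl _)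

/-- Interleaving a `1` after every symbol does not decrease the Levenshtein edit
distance between binary strings (used in Lemma 4.1 to ensure every interval of
each codeword contains at least half `1`s). -/
theorem stmt_14 (x y : List Bool) :
    levenshtein Levenshtein.defaultCost x y
      ≤ levenshtein Levenshtein.defaultCost
          (x.flatMap (fun a => [a, true])) (y.flatMap (fun a => [a, true])) := by
  exact (key (2 * (x.length + y.length)) x y).1 (le_refl _)
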